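/- Abstract generalized derivation relation: under the same hypotheses on Z : 𝔥¹ → R ((i) harmonic product rule, (ii) duality Z∘φ = Z, (iii) Z(x^{l-1}y) = 0), for all s ≥ 0, positive integers m₁,…,m_s, l, and w ∈ 𝔥¹: Z(z^{m₁-1}y⋯z^{m_s-1}y·∂_l(w)) = −Z(z^{l-1}y z^{m₁-1}y⋯z^{m_s-1}y·w) + ∑_{i=1}^{s} Z(z^{m₁-1}y⋯z^{m_{i-1}-1}y z^{m_i-1}x z^{l-1}y z^{m_{i+1}-1}y⋯z^{m_s-1}y·w). -/
import Mathlib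


noncomputable section

/-- 𝔥 = ℚ⟨x,y⟩. -/
abbrev H : Type := FreeAlgebra ℚ (Fin 2)

/-- The generator x. -/
def Xg : H := FreeAlgebra.ι ℚ (0 : Fin 2)

/-- The generator y. -/
def Yg : H := FreeAlgebra.ι ℚ (1 : Fin 2)

/-- z = x + y. -/
def Zg : H := Xg + Yg

/-- Membership in 𝔥¹ = ℚ + 𝔥y. -/
def MemH1 (a : H) : Prop := ∃ (q : ℚ) (h : H), a = algebraMap ℚ H q + h * Yg

/-- The word z_{k₁}⋯z_{k_d} ∈ 𝔥¹, where z_k = x^{k-1}y. -/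
def zword (K : List ℕ+) : H := (K.map fun k => Xg ^ ((k : ℕ) - 1) * Yg).prod

/-- The harmonic product of two words of 𝔥¹, landing in 𝔥¹ ⊆ 𝔥. -/
def hmulF : List ℕ+ → List ℕ+ → H
  | [], L => zword L
  | K, [] => zword K
  | k :: K, l :: L =>
      Xg ^ ((k : ℕ) - 1) * Yg * hmulF K (l :: L)
      + Xg ^ ((l : ℕ) - 1) * Yg * hmulF (k :: K) L
      + Xg ^ (((k : ℕ) + (l : ℕ)) - 1) * Yg * hmulF K L
termination_by K L => K.length + L.length

/-- The automorphism φ of ℚ⟨x,y⟩ with φ(x) = x + y and φ(y) = -y. -/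
def phi : H →ₐ[ℚ] H := FreeAlgebra.lift ℚ (fun i : Fin 2 => if i = 0 then Xg + Yg else -Yg)

/-- The product z^{m₁-1}y ⋯ z^{m_s-1}y. -/
def zy (ms : List ℕ+) : H := (ms.map fun m => Zg ^ ((m : ℕ) - 1) * Yg).prod


lemma zword_nil : zword [] = 1 := by simp [zword]
lemma zword_cons (k : ℕ+) (K : List ℕ+) : zword (k :: K) = Xg ^ ((k:ℕ)-1) * Yg * zword K := by
  simp [zword, mul_assoc]
lemma zword_append (K L : List ℕ+) : zword (K ++ L) = zword K * zword L := by
  simp [zword]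
lemma zword_singleton (k : ℕ+) : zword [k] = Xg ^ ((k:ℕ)-1) * Yg := by simp [zword]
lemma zy_nil : zy [] = 1 := by simp [zy]
lemma zy_cons (k : ℕ+) (K : List ℕ+) : zy (k :: K) = Zg ^ ((k:ℕ)-1) * Yg * zy K := by
  simp [zy, mul_assoc]
lemma phi_X : phi Xg = Zg := by
  rw [show Zg = Xg + Yg from rfl]; simp [phi, Xg, Yg]
lemma phi_Y : phi Yg = -Yg := by simp [phi, Yg]
lemma phi_Z : phi Zg = Xg := by
  rw [show Zg = Xg + Yg from rfl, map_add, phi_X, phi_Y,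
    show Zg = Xg + Yg from rfl]; abel
lemma phi_phi (a : H) : phi (phi a) = a := by
  have h : phi.comp phi = AlgHom.id ℚ H := by
    ext i
    fin_cases i <;> simp [phi, Xg, Yg]
  calc phi (phi a) = (phi.comp phi) a := rfl
    _ = a := by rw [h]; rfl
lemma hm1 (l : ℕ+) : hmulF [l] [] = zword [l] := by rw [hmulF]; simp
lemma hm2 (l m : ℕ+) (M : List ℕ+) : hmulF [l] (m :: M) =
    Xg ^ ((l:ℕ)-1) * Yg * zword (m :: M) + Xg ^ ((m:ℕ)-1) * Yg * hmulF [l] M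
      + Xg ^ (((l:ℕ)+(m:ℕ))-1) * Yg * zword M := by
  simp only [hmulF]
lemma phi_zy (ms : List ℕ+) : phi (zy ms) = ((-1:ℚ)^ms.length) • zword ms := by
  induction ms with
  | nil => simp [zy_nil, zword_nil]
  | cons m M ih =>
    rw [zy_cons, map_mul, map_mul, map_pow, phi_Z, phi_Y, ih, zword_cons]
    simp [pow_succ, mul_smul, smul_smul]

lemma L1 (l k : ℕ+) (M : List ℕ+) : hmulF [l] (M ++ [k])
    = hmulF [l] M * (Xg^((k:ℕ)-1)*Yg)
      + zword M * (Xg^((k:ℕ)-1)*Yg*(Xg^((l:ℕ)-1)*Yg) + Xg^(((k:ℕ)+(l:ℕ))-1)*Yg) := by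
  induction M with
  | nil =>
    rw [List.nil_append, hm2, hm1, Nat.add_comm (l:ℕ) (k:ℕ)]
    simp only [zword_nil, zword_singleton]
    noncomm_ring
  | cons m M' ih =>
    rw [List.cons_append, hm2, ih, hm2]
    simp only [zword_cons, zword_append, zword_singleton, zword_nil]
    noncomm_ring

lemma L3 (l : ℕ+) (ms : List ℕ+) : hmulF [l] ms
    = Xg^((l:ℕ)-1) * Yg * zword ms
      + ∑ i : Fin ms.length,
          zword (ms.take (i:ℕ)) * (Xg^(((ms.get i):ℕ)-1) * Zg * Xg^((l:ℕ)-1) * Yg)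
            * zword (ms.drop ((i:ℕ)+1)) := by
  induction ms with
  | nil => rw [hm1, zword_singleton, zword_nil]; simp
  | cons m M ih =>
    rw [hm2, ih]
    simp only [List.length_cons]
    rw [Fin.sum_univ_succ]
    simp only [List.get_eq_getElem, Fin.val_zero, List.take_zero,
      List.getElem_cons_zero, List.drop_succ_cons, List.drop_zero, Fin.val_succ,
      List.take_succ_cons, List.getElem_cons_succ, zword_cons, zword_nil]
    have hexp : Xg ^ ((m:ℕ)-1) * Zg * Xg ^ ((l:ℕ)-1)
        = Xg ^ (((l:ℕ)+(m:ℕ))-1) + Xg ^ ((m:ℕ)-1) * Yg * Xg ^ ((l:ℕ)-1) := by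
      rw [show Zg = Xg + Yg from rfl]
      have h1 : ((l:ℕ)+(m:ℕ))-1 = ((m:ℕ)-1) + 1 + ((l:ℕ)-1) := by
        have hl : 0 < (l:ℕ) := l.pos; have hm : 0 < (m:ℕ) := m.pos; omega
      rw [h1, pow_add, pow_succ]
      noncomm_ring
    have hsum : ∀ i : Fin M.length,
        Xg ^ ((m:ℕ)-1) * Yg
          * (zword (M.take (i:ℕ)) * (Xg ^ ((M.get i : ℕ)-1) * Zg * Xg^((l:ℕ)-1) * Yg)
              * zword (M.drop ((i:ℕ)+1)))
        = Xg ^ ((m:ℕ)-1) * Yg * zword (M.take (i:ℕ))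
          * (Xg ^ ((M.get i : ℕ)-1) * Zg * Xg^((l:ℕ)-1) * Yg) * zword (M.drop ((i:ℕ)+1)) := by
      intro i; noncomm_ring
    simp only [List.get_eq_getElem] at hsum
    rw [mul_add, Finset.mul_sum, Finset.sum_congr rfl (fun i _ => hsum i), hexp]
    noncomm_ring

/-- The dual derivation ∂' = φ ∘ ∂ ∘ φ. -/
def Dp (D : H →ₗ[ℚ] H) (a : H) : H := phi (D (phi a))

section Deriv
variable (l : ℕ+) (D : H →ₗ[ℚ] H)
  (hD : ∀ a b : H, D (a * b) = D a * b + a * D b)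
  (hx : D Xg = Xg * Zg ^ ((l : ℕ) - 1) * Yg)
  (hy : D Yg = -(Xg * Zg ^ ((l : ℕ) - 1) * Yg))

include hD in
lemma D_one : D 1 = 0 := by
  have h := hD 1 1
  simp only [mul_one, one_mul] at h
  exact left_eq_add.mp h

include hD in
lemma D_alg (q : ℚ) : D (algebraMap ℚ H q) = 0 := by
  rw [Algebra.algebraMap_eq_smul_one, map_smul, D_one D hD, smul_zero]

include hD in
lemma Dp_mul (a b : H) : Dp D (a * b) = Dp D a * b + a * Dp D b := by
  unfold Dp
  rw [map_mul, hD, map_add, map_mul, map_mul, phi_phi, phi_phi]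

include hx hy in
lemma Dp_X : Dp D Xg = 0 := by
  unfold Dp
  rw [phi_X, show Zg = Xg + Yg from rfl, map_add, hx, hy, add_neg_cancel, map_zero]

include hy in
lemma Dp_Y : Dp D Yg = -(Zg * Xg ^ ((l:ℕ)-1) * Yg) := by
  unfold Dp
  rw [phi_Y, map_neg, hy]
  simp only [map_neg, neg_neg, map_mul, map_pow, phi_X, phi_Z, phi_Y]
  noncomm_ring

include hD hx hy in
lemma Dp_Xpow (n : ℕ) : Dp D (Xg ^ n) = 0 := by
  induction n with
  | zero =>
    rw [pow_zero]
    unfold Dp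
    rw [map_one, D_one D hD, map_zero]
  | succ n ih =>
    rw [pow_succ, Dp_mul D hD, ih, Dp_X l D hx hy, zero_mul, mul_zero, add_zero]

include hD hx hy in
lemma Dp_word (n : ℕ) : Dp D (Xg ^ n * Yg) = -(Xg ^ n * (Zg * Xg ^ ((l:ℕ)-1) * Yg)) := by
  rw [Dp_mul D hD, Dp_Xpow l D hD hx hy, Dp_Y l D hy, zero_mul, zero_add, mul_neg]

include hD hy in
lemma D_HY (w : H) (hw : MemH1 w) : ∃ h : H, D w = h * Yg := by
  obtain ⟨q, h, rfl⟩ := hw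
  refine ⟨D h - h * (Xg * Zg ^ ((l:ℕ)-1)), ?_⟩
  rw [map_add, D_alg D hD, zero_add, hD, hy]
  noncomm_ring

end Deriv

lemma memH1_of_hy {u : H} (h : ∃ h : H, u = h * Yg) : MemH1 u := by
  obtain ⟨h, rfl⟩ := h
  exact ⟨0, h, by simp⟩

lemma hy_mul_memH1 {u v : H} (hu : ∃ h : H, u = h * Yg) (hv : MemH1 v) :
    ∃ h : H, u * v = h * Yg := by
  obtain ⟨h, rfl⟩ := hu
  obtain ⟨q, g, rfl⟩ := hv
  refine ⟨q • h + h * Yg * g, ?_⟩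
  rw [Algebra.algebraMap_eq_smul_one]
  noncomm_ring

lemma memH1_mul_hy {u v : H} (hu : MemH1 u) (hv : ∃ h : H, v = h * Yg) :
    ∃ h : H, u * v = h * Yg := by
  obtain ⟨q, g, rfl⟩ := hu
  obtain ⟨h, rfl⟩ := hv
  refine ⟨q • h + g * Yg * h, ?_⟩
  rw [Algebra.algebraMap_eq_smul_one]
  noncomm_ring

lemma memH1_zy (ms : List ℕ+) : MemH1 (zy ms) := by
  induction ms with
  | nil => exact ⟨1, 0, by simp [zy_nil]⟩
  | cons m M ih =>
    refine memH1_of_hy ?_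
    rw [zy_cons]
    exact hy_mul_memH1 ⟨Zg ^ ((m:ℕ)-1), rfl⟩ ih

lemma mul_zword_mem (a : H) :
    ∀ K : List ℕ+, K ≠ [] →
      a * zword K ∈ Submodule.span ℚ (zword '' {K : List ℕ+ | K ≠ []}) := by
  induction a using FreeAlgebra.induction with
  | grade0 q =>
    intro K hK
    rw [← Algebra.smul_def]
    exact Submodule.smul_mem _ _ (Submodule.subset_span ⟨K, hK, rfl⟩)
  | grade1 i =>
    fin_cases i
    · intro K hK
      match K with
      | k :: K' =>
        show Xg * zword (k :: K') ∈ _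
        have : Xg * zword (k :: K') = zword ((k+1) :: K') := by
          rw [zword_cons, zword_cons]
          have h1 : ((k+1 : ℕ+) : ℕ) - 1 = ((k:ℕ) - 1) + 1 := by
            have := k.pos; simp [PNat.add_coe]; omega
          rw [h1, pow_succ']
          noncomm_ring
        rw [this]
        exact Submodule.subset_span ⟨(k+1) :: K', by simp, rfl⟩
    · intro K hK
      show Yg * zword K ∈ _
      have : Yg * zword K = zword (1 :: K) := by
        rw [zword_cons]
        simp
      rw [this]
      exact Submodule.subset_span ⟨1 :: K, by simp, rfl⟩
  | mul a b iha ihb =>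
    intro K hK
    rw [mul_assoc]
    have hb := ihb K hK
    refine Submodule.span_induction ?_ ?_ ?_ ?_ hb
    · rintro x ⟨K', hK', rfl⟩
      exact iha K' hK'
    · simp
    · intro x y _ _ hx hy
      rw [mul_add]; exact Submodule.add_mem _ hx hy
    · intro q x _ hx
      rw [mul_smul_comm]; exact Submodule.smul_mem _ _ hx
  | add a b iha ihb =>
    intro K hK
    rw [add_mul]
    exact Submodule.add_mem _ (iha K hK) (ihb K hK)

lemma mem_span_of_memH1 {w : H} (hw : MemH1 w) :
    w ∈ Submodule.span ℚ (Set.range zword) := by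
  obtain ⟨q, h, rfl⟩ := hw
  refine Submodule.add_mem _ ?_ ?_
  · rw [Algebra.algebraMap_eq_smul_one]
    refine Submodule.smul_mem _ _ (Submodule.subset_span ⟨[], zword_nil⟩)
  · have : h * Yg = h * zword [1] := by rw [zword_singleton]; simp
    rw [this]
    refine Submodule.span_le.mpr ?_ (mul_zword_mem h [1] (by simp))
    exact fun x hx => Submodule.subset_span (by
      obtain ⟨K, _, rfl⟩ := hx; exact ⟨K, rfl⟩)

section Star
variable {R : Type*} [CommRing R] [Algebra ℚ R]
  (Zm : H →ₗ[ℚ] R)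
  (hharm : ∀ K L : List ℕ+, Zm (hmulF K L) = Zm (zword K) * Zm (zword L))
  (hdepth1 : ∀ l : ℕ+, Zm (Xg ^ ((l : ℕ) - 1) * Yg) = 0)
  (l : ℕ+) (D : H →ₗ[ℚ] H)
  (hD : ∀ a b : H, D (a * b) = D a * b + a * D b)
  (hx : D Xg = Xg * Zg ^ ((l : ℕ) - 1) * Yg)
  (hy : D Yg = -(Xg * Zg ^ ((l : ℕ) - 1) * Yg))

include hharm hdepth1 hD hx hy in
lemma star (v : H) (hv : v ∈ Submodule.span ℚ (Set.range zword)) :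
    ∀ M : List ℕ+, Zm (hmulF [l] M * v) = Zm (zword M * Dp D v) := by
  induction hv using Submodule.span_induction with
  | mem x hxr =>
    obtain ⟨K, rfl⟩ := hxr
    induction K with
    | nil =>
      intro M
      rw [zword_nil, mul_one]
      have h2 : Dp D (1 : H) = 0 := by
        unfold Dp; rw [map_one, D_one D hD, map_zero]
      rw [h2, mul_zero, map_zero, hharm [l] M, zword_singleton, hdepth1 l, zero_mul]
    | cons k K' ihK =>
      intro M
      have hd : Dp D (zword (k :: K'))
          = -(Xg ^ ((k:ℕ)-1) * (Zg * Xg ^ ((l:ℕ)-1) * Yg)) * zword K'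
            + (Xg ^ ((k:ℕ)-1) * Yg) * Dp D (zword K') := by
        rw [zword_cons, Dp_mul D hD, Dp_word l D hD hx hy, neg_mul]
      have hexp2 : Xg ^ ((k:ℕ)-1) * (Zg * Xg ^ ((l:ℕ)-1) * Yg)
          = Xg ^ ((k:ℕ)-1) * Yg * (Xg ^ ((l:ℕ)-1) * Yg) + Xg ^ (((k:ℕ)+(l:ℕ))-1) * Yg := by
        rw [show Zg = Xg + Yg from rfl]
        have h1 : ((k:ℕ)+(l:ℕ))-1 = ((k:ℕ)-1) + 1 + ((l:ℕ)-1) := by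
          have := l.pos; have := k.pos; omega
        rw [h1, pow_add, pow_succ]
        noncomm_ring
      have e1 : zword M * Dp D (zword (k :: K'))
          = -(zword M * (Xg ^ ((k:ℕ)-1) * Yg * (Xg ^ ((l:ℕ)-1) * Yg)
                + Xg ^ (((k:ℕ)+(l:ℕ))-1) * Yg) * zword K')
            + zword (M ++ [k]) * Dp D (zword K') := by
        rw [hd, hexp2, zword_append, zword_singleton]
        noncomm_ring
      have e3 : hmulF [l] (M ++ [k]) * zword K'
          = hmulF [l] M * zword (k :: K')
            + zword M * (Xg ^ ((k:ℕ)-1) * Yg * (Xg ^ ((l:ℕ)-1) * Yg)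
                + Xg ^ (((k:ℕ)+(l:ℕ))-1) * Yg) * zword K' := by
        rw [L1, zword_cons]
        noncomm_ring
      rw [e1, map_add, map_neg, ← ihK (M ++ [k]), e3, map_add]
      ring
  | zero =>
    intro M
    simp [Dp]
  | add x y _ _ ihx ihy =>
    intro M
    have hDp : Dp D (x + y) = Dp D x + Dp D y := by simp [Dp]
    rw [mul_add, map_add, hDp, mul_add, map_add, ihx M, ihy M]
  | smul q x _ ihx =>
    intro M
    have hDp : Dp D (q • x) = q • Dp D x := by simp [Dp]
    rw [mul_smul_comm, map_smul, hDp, mul_smul_comm, map_smul, ihx M]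

end Star

lemma memH1_phi {w : H} (hw : MemH1 w) : MemH1 (phi w) := by
  obtain ⟨q, h, rfl⟩ := hw
  refine ⟨q, -(phi h), ?_⟩
  rw [map_add, map_mul, phi_Y, AlgHom.commutes]
  noncomm_ring


/-- Generalized derivation relation (abstract form): under the same hypotheses
on Z, for all m₁,…,m_s, l ≥ 1 and w ∈ 𝔥¹,
Z(z^{m₁-1}y⋯z^{m_s-1}y ∂_l(w)) = −Z(z^{l-1}y z^{m₁-1}y⋯z^{m_s-1}y w)
  + ∑ᵢ Z(z^{m₁-1}y⋯z^{m_i-1}x z^{l-1}y⋯z^{m_s-1}y w). -/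
theorem abstract_generalized_derivation_relation (R : Type*) [CommRing R] [Algebra ℚ R]
    (Zm : H →ₗ[ℚ] R)
    (hharm : ∀ K L : List ℕ+, Zm (hmulF K L) = Zm (zword K) * Zm (zword L))
    (hdual : ∀ a : H, MemH1 a → Zm (phi a) = Zm a)
    (hdepth1 : ∀ l : ℕ+, Zm (Xg ^ ((l : ℕ) - 1) * Yg) = 0)
    (l : ℕ+) (D : H →ₗ[ℚ] H)
    (hD : ∀ a b : H, D (a * b) = D a * b + a * D b)
    (hx : D Xg = Xg * Zg ^ ((l : ℕ) - 1) * Yg)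
    (hy : D Yg = -(Xg * Zg ^ ((l : ℕ) - 1) * Yg))
    (ms : List ℕ+) (w : H) (hw : MemH1 w) :
    Zm (zy ms * D w)
      = -(Zm (Zg ^ ((l : ℕ) - 1) * Yg * zy ms * w))
        + ∑ i : Fin ms.length,
            Zm (zy (ms.take (i : ℕ))
              * (Zg ^ ((ms.get i : ℕ) - 1) * Xg * Zg ^ ((l : ℕ) - 1) * Yg)
              * zy (ms.drop ((i : ℕ) + 1)) * w) := by
  have hv : MemH1 (phi w) := memH1_phi hw
  have hvs : phi w ∈ Submodule.span ℚ (Set.range zword) := mem_span_of_memH1 hv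
  -- left-hand side
  have hmem1 : MemH1 (zy ms * D w) :=
    memH1_of_hy (memH1_mul_hy (memH1_zy ms) (D_HY l D hD hy w hw))
  have hL : Zm (zy ms * D w) = ((-1:ℚ)^ms.length) • Zm (hmulF [l] ms * phi w) := by
    rw [← hdual _ hmem1, map_mul, phi_zy, smul_mul_assoc, map_smul]
    congr 1
    rw [show phi (D w) = Dp D (phi w) from by unfold Dp; rw [phi_phi]]
    exact (star Zm hharm hdepth1 l D hD hx hy (phi w) hvs ms).symm
  have hsplit : Zm (hmulF [l] ms * phi w)
      = Zm ((Xg^((l:ℕ)-1) * Yg * zword ms) * phi w)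
        + ∑ i : Fin ms.length,
            Zm ((zword (ms.take (i:ℕ))
              * (Xg^(((ms.get i):ℕ)-1) * Zg * Xg^((l:ℕ)-1) * Yg)
              * zword (ms.drop ((i:ℕ)+1))) * phi w) := by
    rw [L3 l ms, add_mul, Finset.sum_mul, map_add, map_sum]
  -- first right-hand term
  have hmemA : MemH1 (Zg ^ ((l:ℕ)-1) * Yg * zy ms * w) :=
    memH1_of_hy (hy_mul_memH1
      (hy_mul_memH1 ⟨Zg ^ ((l:ℕ)-1), rfl⟩ (memH1_zy ms)) hw)
  have hA : Zm (Zg ^ ((l:ℕ)-1) * Yg * zy ms * w)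
      = ((-1:ℚ)^(ms.length+1)) • Zm ((Xg^((l:ℕ)-1) * Yg * zword ms) * phi w) := by
    rw [← hdual _ hmemA]
    have harg : phi (Zg ^ ((l:ℕ)-1) * Yg * zy ms * w)
        = ((-1:ℚ)^(ms.length+1)) • ((Xg^((l:ℕ)-1) * Yg * zword ms) * phi w) := by
      rw [map_mul, map_mul, map_mul, map_pow, phi_Z, phi_Y, phi_zy, pow_succ]
      simp only [mul_neg, neg_mul, mul_smul_comm, smul_mul_assoc, neg_smul, smul_neg,
        mul_neg_one, neg_neg, mul_one]
    rw [harg, map_smul]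
  -- the summed right-hand terms
  have hB : ∀ i : Fin ms.length,
      Zm (zy (ms.take (i:ℕ))
          * (Zg ^ ((ms.get i : ℕ)-1) * Xg * Zg ^ ((l:ℕ)-1) * Yg)
          * zy (ms.drop ((i:ℕ)+1)) * w)
        = ((-1:ℚ)^ms.length) • Zm ((zword (ms.take (i:ℕ))
            * (Xg^(((ms.get i):ℕ)-1) * Zg * Xg^((l:ℕ)-1) * Yg)
            * zword (ms.drop ((i:ℕ)+1))) * phi w) := by
    intro i
    have hmemB : MemH1 (zy (ms.take (i:ℕ))
        * (Zg ^ ((ms.get i : ℕ)-1) * Xg * Zg ^ ((l:ℕ)-1) * Yg)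
        * zy (ms.drop ((i:ℕ)+1)) * w) :=
      memH1_of_hy (hy_mul_memH1 (hy_mul_memH1
        (memH1_mul_hy (memH1_zy _) ⟨Zg ^ ((ms.get i : ℕ)-1) * Xg * Zg ^ ((l:ℕ)-1), rfl⟩)
        (memH1_zy _)) hw)
    rw [← hdual _ hmemB]
    have hsc : ((-1:ℚ)^(i:ℕ)) * ((-1:ℚ)^(ms.length - ((i:ℕ)+1))) * (-1)
        = (-1:ℚ)^ms.length := by
      have h : (i:ℕ) + (ms.length - ((i:ℕ)+1)) + 1 = ms.length := by
        have := i.isLt; omega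
      have h2 : ((-1:ℚ))^((i:ℕ) + (ms.length - ((i:ℕ)+1)) + 1) = (-1:ℚ)^ms.length := by
        rw [h]
      rw [← h2, pow_add, pow_add, pow_one]
    have harg : phi (zy (ms.take (i:ℕ))
        * (Zg ^ ((ms.get i : ℕ)-1) * Xg * Zg ^ ((l:ℕ)-1) * Yg)
        * zy (ms.drop ((i:ℕ)+1)) * w)
        = ((-1:ℚ)^ms.length) • ((zword (ms.take (i:ℕ))
            * (Xg^(((ms.get i):ℕ)-1) * Zg * Xg^((l:ℕ)-1) * Yg)
            * zword (ms.drop ((i:ℕ)+1))) * phi w) := by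
      simp only [map_mul, map_pow, phi_Z, phi_X, phi_Y, phi_zy]
      rw [List.length_take, List.length_drop, min_eq_left i.isLt.le, ← hsc]
      simp only [mul_neg, neg_mul, mul_smul_comm, smul_mul_assoc, neg_smul, smul_neg,
        neg_neg, mul_one, smul_smul]
      rw [mul_comm ((-1:ℚ)^(ms.length - ((i:ℕ)+1)))]
    rw [harg, map_smul]
  rw [hL, hsplit, hA, Finset.sum_congr rfl (fun i _ => hB i)]
  simp only [pow_succ, smul_add, Finset.smul_sum, neg_smul, mul_neg_one, neg_neg, smul_neg]

end
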